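/- Let (L, ∨, ∧) be a finite distributive lattice with a probability measure μ on L satisfying the log-supermodularity condition μ(ℓ₁ ∧ ℓ₂) μ(ℓ₁ ∨ ℓ₂) ≥ μ(ℓ₁) μ(ℓ₂) for all ℓ₁, ℓ₂ ∈ L. If h₁ and h₂ are both monotone increasing real-valued functions on L with respect to the lattice partial order, then Σ_ℓ h₁(ℓ)h₂(ℓ)μ(ℓ) ≥ (Σ_ℓ h₁(ℓ)μ(ℓ))(Σ_ℓ h₂(ℓ)μ(ℓ)). -/
import Mathlib

open Finset

/-- FKG inequality: on a finite distributive lattice `L` with a probability measure `μ`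
satisfying `μ(ℓ₁ ∧ ℓ₂) μ(ℓ₁ ∨ ℓ₂) ≥ μ(ℓ₁) μ(ℓ₂)`, any two increasing functions
`h₁, h₂` are positively correlated. -/
theorem fkg_inequality
    {L : Type*} [Fintype L] [DistribLattice L]
    (μ : L → ℝ)
    (hμ_nonneg : ∀ ℓ, 0 ≤ μ ℓ)
    (hμ_prob : ∑ ℓ : L, μ ℓ = 1)
    (hμ_logsupermod : ∀ ℓ₁ ℓ₂ : L, μ (ℓ₁ ⊓ ℓ₂) * μ (ℓ₁ ⊔ ℓ₂) ≥ μ ℓ₁ * μ ℓ₂)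
    (h₁ h₂ : L → ℝ)
    (hh₁ : Monotone h₁) (hh₂ : Monotone h₂) :
    ∑ ℓ : L, h₁ ℓ * h₂ ℓ * μ ℓ
      ≥ (∑ ℓ : L, h₁ ℓ * μ ℓ) * (∑ ℓ : L, h₂ ℓ * μ ℓ) := by
  have hne : (univ : Finset L).Nonempty := by
    by_contra h
    rw [not_nonempty_iff_eq_empty] at h
    rw [h, sum_empty] at hμ_prob
    norm_num at hμ_prob
  set c₁ : ℝ := univ.inf' hne h₁ with hc₁
  set c₂ : ℝ := univ.inf' hne h₂ with hc₂
  set f : L → ℝ := fun ℓ => h₁ ℓ - c₁ with hf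
  set g : L → ℝ := fun ℓ => h₂ ℓ - c₂ with hg
  have hf0 : 0 ≤ f := fun ℓ => sub_nonneg.2 (inf'_le _ (mem_univ ℓ))
  have hg0 : 0 ≤ g := fun ℓ => sub_nonneg.2 (inf'_le _ (mem_univ ℓ))
  have hfm : Monotone f := fun a b hab => by simpa [hf] using hh₁ hab
  have hgm : Monotone g := fun a b hab => by simpa [hg] using hh₂ hab
  have key := fkg (μ := μ) (f := f) (g := g) (fun ℓ => hμ_nonneg ℓ) hf0 hg0 hfm hgm
    (fun a b => (hμ_logsupermod a b).le)
  have e1 : ∑ a : L, μ a * f a = (∑ ℓ : L, h₁ ℓ * μ ℓ) - c₁ := by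
    simp [hf, mul_sub, sum_sub_distrib, ← sum_mul, hμ_prob, mul_comm]
  have e2 : ∑ a : L, μ a * g a = (∑ ℓ : L, h₂ ℓ * μ ℓ) - c₂ := by
    simp [hg, mul_sub, sum_sub_distrib, ← sum_mul, hμ_prob, mul_comm]
  have e3 : ∑ a : L, μ a * (f a * g a)
      = (∑ ℓ : L, h₁ ℓ * h₂ ℓ * μ ℓ) - c₂ * (∑ ℓ : L, h₁ ℓ * μ ℓ)
        - c₁ * (∑ ℓ : L, h₂ ℓ * μ ℓ) + c₁ * c₂ := by
    have : ∀ a : L, μ a * (f a * g a)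
        = h₁ a * h₂ a * μ a - c₂ * (h₁ a * μ a) - c₁ * (h₂ a * μ a) + c₁ * c₂ * μ a := by
      intro a; simp only [hf, hg]; ring
    rw [sum_congr rfl fun a _ => this a]
    simp [sum_add_distrib, sum_sub_distrib, ← mul_sum, hμ_prob]
  rw [e1, e2, e3, hμ_prob, one_mul] at key
  nlinarith [key]
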